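/- Let G be a connected graph on n vertices with adjacency eigenvalues λ₁ ≥ ⋯ ≥ λₙ, λ = max{|λ₂|,|λₙ|}, and normalized Perron eigenvector ν. For a natural number k, write x^{(k)} = x + x² + ⋯ + x^k, and for S, T ⊆ V let W_k(S,T) be the number of walks of length at most k with one endpoint in S and one in T. Then |W_k(S,T) − λ₁^{(k)}⟨χ_S,ν⟩⟨χ_T,ν⟩| ≤ λ^{(k)}·sqrt((|S| − ⟨χ_S,ν⟩²)(|T| − ⟨χ_T,ν⟩²)). -/

import Mathlib

open Matrix Finset

set_option maxHeartbeats 1000000 in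
/-- **Walk Expander Mixing Lemma for irregular graphs** (Corollary 22 of the paper):
`W_k(S,T) = χ_Sᵀ(A + A² + ⋯ + A^k)χ_T` satisfies
`|W_k(S,T) − λ₁^{(k)}⟨χ_S,ν⟩⟨χ_T,ν⟩| ≤ λ^{(k)} √((|S| − ⟨χ_S,ν⟩²)(|T| − ⟨χ_T,ν⟩²))`. -/
theorem walk_expander_mixing {n : ℕ} (hn : 2 ≤ n) (k : ℕ)
    (G : SimpleGraph (Fin n)) [DecidableRel G.Adj] (hG : G.Connected)
    (A : Matrix (Fin n) (Fin n) ℝ) (hA : A = G.adjMatrix ℝ)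
    (hAH : A.IsHermitian)
    (lam : Fin n → ℝ) (hmono : Antitone lam)
    (heig : ∃ e : Fin n ≃ Fin n, ∀ i, lam i = hAH.eigenvalues (e i))
    (ν : Fin n → ℝ) (hνpos : ∀ i, 0 < ν i) (hνnorm : ∑ i, ν i ^ 2 = 1)
    (hνeig : A *ᵥ ν = lam ⟨0, by omega⟩ • ν)
    (lamAbs : ℝ)
    (hlamAbs : lamAbs = max |lam ⟨1, by omega⟩| |lam ⟨n - 1, by omega⟩|)
    (S T : Finset (Fin n)) :
    |(fun u => if u ∈ S then (1 : ℝ) else 0) ⬝ᵥ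
        ((∑ i ∈ Finset.Icc 1 k, A ^ i) *ᵥ fun u => if u ∈ T then (1 : ℝ) else 0)
      - (∑ i ∈ Finset.Icc 1 k, lam ⟨0, by omega⟩ ^ i) *
          (∑ u ∈ S, ν u) * (∑ u ∈ T, ν u)|
      ≤ (∑ i ∈ Finset.Icc 1 k, lamAbs ^ i) *
        Real.sqrt (((S.card : ℝ) - (∑ u ∈ S, ν u) ^ 2) *
          ((T.card : ℝ) - (∑ u ∈ T, ν u) ^ 2)) := by
  obtain ⟨e, he⟩ := heig
  set i0 : Fin n := ⟨0, by omega⟩ with hi0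
  set i1 : Fin n := ⟨1, by omega⟩ with hi1
  set ilast : Fin n := ⟨n - 1, by omega⟩ with hilast
  set χS : Fin n → ℝ := fun u => if u ∈ S then 1 else 0 with hχS
  set χT : Fin n → ℝ := fun u => if u ∈ T then 1 else 0 with hχT
  set α : ℝ := ∑ u ∈ S, ν u with hα
  set β : ℝ := ∑ u ∈ T, ν u with hβ
  set B : Matrix (Fin n) (Fin n) ℝ := ∑ i ∈ Finset.Icc 1 k, A ^ i with hB
  set c : ℝ := ∑ i ∈ Finset.Icc 1 k, lam i0 ^ i with hc
  set C : ℝ := ∑ i ∈ Finset.Icc 1 k, lamAbs ^ i with hC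
  set s : Fin n → ℝ := χS - α • ν with hs
  set t : Fin n → ℝ := χT - β • ν with ht
  set v : Fin n → Fin n → ℝ := fun j => (hAH.eigenvectorBasis j : Fin n → ℝ) with hv
  set μ : Fin n → ℝ := hAH.eigenvalues with hμdef
  set d : Fin n → ℝ := fun j => ∑ i ∈ Finset.Icc 1 k, μ j ^ i with hd
  -- symmetry
  have hsym : Aᵀ = A := by simpa using hAH.eq
  have hdot : ∀ M : Matrix (Fin n) (Fin n) ℝ, Mᵀ = M →
      ∀ x y : Fin n → ℝ, x ⬝ᵥ (M *ᵥ y) = (M *ᵥ x) ⬝ᵥ y := by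
    intro M hM x y
    have hAx : M *ᵥ x = x ᵥ* M := by nth_rewrite 1 [← hM]; exact Matrix.mulVec_transpose M x
    rw [Matrix.dotProduct_mulVec, hAx]
  have hBsym : Bᵀ = B := by
    rw [hB, Matrix.transpose_sum]
    exact Finset.sum_congr rfl fun i _ => by rw [Matrix.transpose_pow, hsym]
  -- sum helpers
  have hsumMV : ∀ (F : ℕ → Matrix (Fin n) (Fin n) ℝ) (x : Fin n → ℝ),
      (∑ i ∈ Finset.Icc 1 k, F i) *ᵥ x = ∑ i ∈ Finset.Icc 1 k, F i *ᵥ x := by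
    intro F x
    ext u
    simp only [Matrix.mulVec, dotProduct, Matrix.sum_apply, Finset.sum_apply, Finset.sum_mul]
    rw [Finset.sum_comm]
  have hmvsum : ∀ (w : Fin n → Fin n → ℝ), B *ᵥ (∑ j, w j) = ∑ j, B *ᵥ w j := by
    intro w
    ext u
    simp only [Matrix.mulVec, dotProduct, Finset.sum_apply, Finset.mul_sum]
    rw [Finset.sum_comm]
  have hdots : ∀ (x : Fin n → ℝ) (w : Fin n → Fin n → ℝ),
      x ⬝ᵥ (∑ j, w j) = ∑ j, x ⬝ᵥ w j := by
    intro x w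
    simp only [dotProduct, Finset.sum_apply, Finset.mul_sum]
    rw [Finset.sum_comm]
  -- basic dot products
  have hνν : ν ⬝ᵥ ν = 1 := by
    rw [dotProduct, ← hνnorm]; exact Finset.sum_congr rfl fun i _ => (sq (ν i)).symm
  have hχSν : χS ⬝ᵥ ν = α := by
    rw [hχS, hα, dotProduct]; simp [ite_mul]
  have hχTν : χT ⬝ᵥ ν = β := by
    rw [hχT, hβ, dotProduct]; simp [ite_mul]
  have hχSχS : χS ⬝ᵥ χS = (S.card : ℝ) := by
    rw [hχS, dotProduct]; simp [ite_and]
  have hχTχT : χT ⬝ᵥ χT = (T.card : ℝ) := by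
    rw [hχT, dotProduct]; simp [ite_and]
  have hsν : s ⬝ᵥ ν = 0 := by
    rw [hs, sub_dotProduct, smul_dotProduct, hχSν, hνν]; simp
  have htν : t ⬝ᵥ ν = 0 := by
    rw [ht, sub_dotProduct, smul_dotProduct, hχTν, hνν]; simp
  have hss : s ⬝ᵥ s = (S.card : ℝ) - α ^ 2 := by
    rw [hs]
    simp only [sub_dotProduct, dotProduct_sub, smul_dotProduct,
      dotProduct_smul, hχSχS, hχSν, hνν, dotProduct_comm ν χS, hχSν,
      smul_eq_mul]
    ring
  have htt : t ⬝ᵥ t = (T.card : ℝ) - β ^ 2 := by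
    rw [ht]
    simp only [sub_dotProduct, dotProduct_sub, smul_dotProduct,
      dotProduct_smul, hχTχT, hχTν, hνν, dotProduct_comm ν χT, hχTν,
      smul_eq_mul]
    ring
  -- eigen machinery
  have hortho : ∀ i j, v i ⬝ᵥ v j = if i = j then 1 else 0 := by
    intro i j
    have h := orthonormal_iff_ite.mp hAH.eigenvectorBasis.orthonormal i j
    rw [← h]
    simp [PiLp.inner_apply, dotProduct, hv]
    exact Finset.sum_congr rfl fun _ _ => mul_comm _ _
  have expand : ∀ x : Fin n → ℝ, x = ∑ j, (v j ⬝ᵥ x) • v j := by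
    intro x
    have h := congrArg WithLp.ofLp (hAH.eigenvectorBasis.sum_repr (WithLp.toLp 2 x)).symm
    simp_rw [OrthonormalBasis.repr_apply_apply, EuclideanSpace.inner_eq_star_dotProduct,
      WithLp.ofLp_sum, WithLp.ofLp_smul, star_trivial, dotProduct_comm x] at h
    convert h using 2
  have hAv : ∀ j, A *ᵥ v j = μ j • v j := fun j => hAH.mulVec_eigenvectorBasis j
  have hpow : ∀ (i : ℕ) (x : Fin n → ℝ) (r : ℝ), A *ᵥ x = r • x → A ^ i *ᵥ x = r ^ i • x := by
    intro i x r hx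
    induction i with
    | zero => simp
    | succ m ih =>
      rw [pow_succ, ← Matrix.mulVec_mulVec, hx, Matrix.mulVec_smul, ih, smul_smul, pow_succ, mul_comm]
  have hBv : ∀ j, B *ᵥ v j = d j • v j := by
    intro j
    rw [hB, hsumMV, hd, Finset.sum_smul]
    exact Finset.sum_congr rfl fun i _ => hpow i (v j) (μ j) (hAv j)
  have hBν : B *ᵥ ν = c • ν := by
    rw [hB, hsumMV, hc, Finset.sum_smul]
    exact Finset.sum_congr rfl fun i _ => hpow i ν (lam i0) hνeig
  -- the main identity
  have hmain : χS ⬝ᵥ (B *ᵥ χT) - c * α * β = s ⬝ᵥ (B *ᵥ t) := by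
    have hχSeq : χS = s + α • ν := by rw [hs, sub_add_cancel]
    have hχTeq : χT = t + β • ν := by rw [ht, sub_add_cancel]
    have hνBt : ν ⬝ᵥ (B *ᵥ t) = 0 := by
      rw [hdot B hBsym, hBν, smul_dotProduct, dotProduct_comm ν t, htν]
      simp
    rw [hχSeq, hχTeq, Matrix.mulVec_add, Matrix.mulVec_smul, hBν]
    simp only [add_dotProduct, dotProduct_add, smul_dotProduct,
      dotProduct_smul, hνBt, hsν, hνν, smul_eq_mul]
    ring
  -- positivity
  have hlamAbs0 : 0 ≤ lamAbs := by
    rw [hlamAbs]; exact le_trans (abs_nonneg _) (le_max_left _ _)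
  have hC0 : 0 ≤ C := by
    rw [hC]; exact Finset.sum_nonneg fun i _ => pow_nonneg hlamAbs0 i
  have hμlam : ∀ j, μ j = lam (e.symm j) := by
    intro j
    have h := he (e.symm j)
    rw [Equiv.apply_symm_apply] at h
    exact h.symm
  have habs : ∀ p : Fin n, p ≠ i0 → |lam p| ≤ lamAbs := by
    intro p hp
    have hpv : p.val ≠ 0 := fun h => hp (Fin.ext h)
    have hple := p.isLt
    have h1 : lam p ≤ lam i1 := hmono (by simp [Fin.le_def, hi1]; omega)
    have h2 : lam ilast ≤ lam p := hmono (by simp [Fin.le_def, hilast]; omega)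
    rw [abs_le]
    constructor
    · calc -lamAbs ≤ -|lam ilast| := neg_le_neg (hlamAbs ▸ le_max_right _ _)
        _ ≤ lam ilast := neg_abs_le _
        _ ≤ lam p := h2
    · exact h1.trans ((le_abs_self _).trans (hlamAbs ▸ le_max_left _ _))
  have hdj : ∀ j, |μ j| ≤ lamAbs → |d j| ≤ C := by
    intro j h
    rw [hd, hC]
    calc |∑ i ∈ Finset.Icc 1 k, μ j ^ i| ≤ ∑ i ∈ Finset.Icc 1 k, |μ j ^ i| :=
          Finset.abs_sum_le_sum_abs _ _
      _ ≤ ∑ i ∈ Finset.Icc 1 k, lamAbs ^ i := Finset.sum_le_sum fun i _ => by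
          rw [abs_pow]; exact pow_le_pow_left₀ (abs_nonneg _) h i
  -- key per-j bound
  have hkey : ∀ j, |d j * ((s ⬝ᵥ v j) * (t ⬝ᵥ v j))| ≤ C * (|s ⬝ᵥ v j| * |t ⬝ᵥ v j|) := by
    intro j
    have hbound : |μ j| ≤ lamAbs → |d j * ((s ⬝ᵥ v j) * (t ⬝ᵥ v j))| ≤
        C * (|s ⬝ᵥ v j| * |t ⬝ᵥ v j|) := by
      intro h
      rw [abs_mul, abs_mul]
      exact mul_le_mul_of_nonneg_right (hdj j h) (by positivity)
    by_cases hp : e.symm j = i0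
    · by_cases hdeg : lam i1 = lam i0
      · exact hbound (by rw [hμlam j, hp, ← hdeg, hlamAbs]; exact le_max_left _ _)
      · have hlt : lam i1 < lam i0 :=
          lt_of_le_of_ne (hmono (by simp [Fin.le_def, hi0, hi1])) hdeg
        have hνm : ∀ m, m ≠ j → v m ⬝ᵥ ν = 0 := by
          intro m hm
          have h1 : v m ⬝ᵥ (A *ᵥ ν) = μ m * (v m ⬝ᵥ ν) := by
            rw [hdot A hsym, hAv m, smul_dotProduct, smul_eq_mul]
          have h2 : v m ⬝ᵥ (A *ᵥ ν) = lam i0 * (v m ⬝ᵥ ν) := by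
            rw [hνeig, dotProduct_smul, smul_eq_mul]
          have hne : μ m ≠ lam i0 := by
            rw [hμlam m]
            intro hEq
            have hm0 : e.symm m ≠ i0 := fun h0 => hm (by
              have := congrArg e (h0.trans hp.symm)
              simpa using this)
            have hle : lam (e.symm m) ≤ lam i1 := hmono (by
              have : (e.symm m).val ≠ 0 := fun h0 => hm0 (Fin.ext h0)
              simp [Fin.le_def, hi1]; omega)
            rw [hEq] at hle
            exact absurd (lt_of_le_of_lt hle hlt) (lt_irrefl _)
          have h3 : (μ m - lam i0) * (v m ⬝ᵥ ν) = 0 := by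
            rw [sub_mul, ← h1, ← h2, sub_self]
          exact (mul_eq_zero.mp h3).resolve_left (sub_ne_zero.mpr hne)
        have hνexp : ν = (v j ⬝ᵥ ν) • v j := by
          conv_lhs => rw [expand ν]
          rw [Finset.sum_eq_single j (fun m _ hm => by rw [hνm m hm, zero_smul])
            (fun h => absurd (Finset.mem_univ j) h)]
        have hcj : (v j ⬝ᵥ ν) ≠ 0 := by
          intro h0
          have h1 : ν ⬝ᵥ ν = 0 := by
            nth_rewrite 2 [hνexp]
            rw [dotProduct_smul, h0, zero_smul]
          rw [hνν] at h1
          norm_num at h1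
        have hsvj : s ⬝ᵥ v j = 0 := by
          have h2 := hsν
          rw [hνexp, dotProduct_smul, smul_eq_mul] at h2
          exact (mul_eq_zero.mp h2).resolve_left hcj
        rw [hsvj]
        simp only [zero_mul, mul_zero, abs_zero]
        positivity
    · exact hbound (by rw [hμlam j]; exact habs _ hp)
  -- expansion of the quadratic form
  have hexp : s ⬝ᵥ (B *ᵥ t) = ∑ j, d j * ((s ⬝ᵥ v j) * (t ⬝ᵥ v j)) := by
    calc s ⬝ᵥ (B *ᵥ t) = s ⬝ᵥ (B *ᵥ ∑ j, (v j ⬝ᵥ t) • v j) := by rw [← expand t]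
      _ = s ⬝ᵥ ∑ j, (v j ⬝ᵥ t) • (B *ᵥ v j) := by
          rw [hmvsum]
          congr 1
          exact Finset.sum_congr rfl fun j _ => Matrix.mulVec_smul _ _ _
      _ = ∑ j, (v j ⬝ᵥ t) * (s ⬝ᵥ (B *ᵥ v j)) := by
          rw [hdots]
          exact Finset.sum_congr rfl fun j _ => by rw [dotProduct_smul, smul_eq_mul]
      _ = ∑ j, d j * ((s ⬝ᵥ v j) * (t ⬝ᵥ v j)) := by
          refine Finset.sum_congr rfl fun j _ => ?_
          rw [hBv j, dotProduct_smul, smul_eq_mul, dotProduct_comm (v j) t]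
          ring
  -- Parseval
  have hpars : ∀ x : Fin n → ℝ, x ⬝ᵥ x = ∑ j, (x ⬝ᵥ v j) ^ 2 := by
    intro x
    calc x ⬝ᵥ x = x ⬝ᵥ ∑ j, (v j ⬝ᵥ x) • v j := congrArg (fun y => x ⬝ᵥ y) (expand x)
      _ = ∑ j, (v j ⬝ᵥ x) * (x ⬝ᵥ v j) := by
          rw [hdots]
          exact Finset.sum_congr rfl fun j _ => by rw [dotProduct_smul, smul_eq_mul]
      _ = ∑ j, (x ⬝ᵥ v j) ^ 2 := Finset.sum_congr rfl fun j _ => by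
          rw [dotProduct_comm (v j) x]; ring
  -- Cauchy–Schwarz for coefficients
  have hCS : ∑ j, |s ⬝ᵥ v j| * |t ⬝ᵥ v j| ≤
      Real.sqrt (((S.card : ℝ) - α ^ 2) * ((T.card : ℝ) - β ^ 2)) := by
    have h1 : (∑ j, |s ⬝ᵥ v j| * |t ⬝ᵥ v j|) ^ 2 ≤
        (∑ j, |s ⬝ᵥ v j| ^ 2) * (∑ j, |t ⬝ᵥ v j| ^ 2) :=
      Finset.sum_mul_sq_le_sq_mul_sq _ _ _
    simp_rw [sq_abs] at h1
    rw [← hpars s, ← hpars t, hss, htt] at h1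
    have h0 : 0 ≤ ∑ j, |s ⬝ᵥ v j| * |t ⬝ᵥ v j| :=
      Finset.sum_nonneg fun j _ => mul_nonneg (abs_nonneg _) (abs_nonneg _)
    exact Real.le_sqrt_of_sq_le h1
  -- assembling
  calc |χS ⬝ᵥ (B *ᵥ χT) - c * α * β|
      = |∑ j, d j * ((s ⬝ᵥ v j) * (t ⬝ᵥ v j))| := by rw [hmain, hexp]
    _ ≤ ∑ j, |d j * ((s ⬝ᵥ v j) * (t ⬝ᵥ v j))| := Finset.abs_sum_le_sum_abs _ _
    _ ≤ ∑ j, C * (|s ⬝ᵥ v j| * |t ⬝ᵥ v j|) := Finset.sum_le_sum fun j _ => hkey j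
    _ = C * ∑ j, |s ⬝ᵥ v j| * |t ⬝ᵥ v j| := by rw [Finset.mul_sum]
    _ ≤ C * Real.sqrt (((S.card : ℝ) - α ^ 2) * ((T.card : ℝ) - β ^ 2)) :=
        mul_le_mul_of_nonneg_left hCS hC0
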